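/- The ETD Euler method is first-order exact on affine problems and, more generally, if u solves u' = L u + N(u) with N Lipschitz, the one-step error of the ETD Euler update u^{n+1} = e^{hL} u(t_n) + h φ_1(hL) N(u(t_n)) satisfies ‖u(t_{n+1}) − u^{n+1}‖ ≤ C h^2, where C depends only on the Lipschitz constant of N and a bound for ‖N(u(t))‖ and ‖u'(t)‖ on [t_n, t_{n+1}], provided the real parts of the eigenvalues of the diagonal matrix L are nonpositive. -/

import Mathlib

open Matrix

noncomputable def phi1C (z : ℂ) : ℂ := ∑' k : ℕ, ((Nat.factorial (k + 1) : ℂ))⁻¹ * z ^ k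

lemma summable_phi1C (z : ℂ) :
    Summable (fun k : ℕ => ((Nat.factorial (k + 1) : ℂ))⁻¹ * z ^ k) := by
  apply Summable.of_norm
  apply Summable.of_nonneg_of_le (fun k => norm_nonneg _) _ (Real.summable_pow_div_factorial ‖z‖)
  intro k
  rw [norm_mul, norm_pow, norm_inv]
  have h1 : ‖((Nat.factorial (k + 1) : ℂ))‖ = (Nat.factorial (k + 1) : ℝ) := by
    simp [Complex.norm_natCast]
  rw [h1, div_eq_mul_inv, mul_comm]
  have hfle : (Nat.factorial k : ℝ) ≤ (Nat.factorial (k+1) : ℝ) := by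
    exact_mod_cast Nat.factorial_le (Nat.le_succ k)
  have hfpos : (0:ℝ) < (Nat.factorial k : ℝ) := by exact_mod_cast Nat.factorial_pos k
  gcongr

lemma mul_phi1C (z : ℂ) : z * phi1C z = Complex.exp z - 1 := by
  have hsum : Summable (fun n : ℕ => ((Nat.factorial n : ℂ))⁻¹ * z ^ n) := by
    have := (NormedSpace.expSeries_summable' (𝕂 := ℂ) z)
    simpa [smul_eq_mul] using this
  have hexp : Complex.exp z = ∑' n : ℕ, ((Nat.factorial n : ℂ))⁻¹ * z ^ n := by
    rw [Complex.exp_eq_exp_ℂ, NormedSpace.exp_eq_tsum ℂ]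
    simp [smul_eq_mul]
  rw [phi1C, ← tsum_mul_left]
  rw [hexp, hsum.tsum_eq_zero_add]
  simp only [pow_zero, Nat.factorial_zero, Nat.cast_one, inv_one, mul_one]
  rw [add_sub_cancel_left]
  congr 1
  funext k
  ring

lemma phi1C_zero : phi1C 0 = 1 := by
  rw [phi1C, tsum_eq_single 0 (fun k hk => by simp [zero_pow hk])]
  simp

lemma integral_exp_phi1C (lam : ℂ) (h : ℝ) :
    (∫ s in (0:ℝ)..h, Complex.exp (lam * s)) = (h : ℂ) * phi1C ((h : ℂ) * lam) := by
  by_cases hlam : lam = 0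
  · simp [hlam, phi1C_zero]
  · rw [integral_exp_mul_complex hlam]
    have := mul_phi1C ((h : ℂ) * lam)
    rw [div_eq_iff hlam, mul_comm lam ((h:ℂ))]
    simp only [Complex.ofReal_zero, mul_zero, Complex.exp_zero]
    linear_combination -this


/-- φ_1 of a matrix, defined via the power series ∑_{k≥0} M^k/(k+1)!. -/
noncomputable def phi1Mat {n : ℕ} (M : Matrix (Fin n) (Fin n) ℂ) : Matrix (Fin n) (Fin n) ℂ :=
  ∑' k : ℕ, ((Nat.factorial (k + 1) : ℂ)⁻¹) • M ^ k

lemma phi1Mat_diagonal {n : ℕ} (v : Fin n → ℂ) :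
    phi1Mat (diagonal v) = diagonal (fun i => phi1C (v i)) := by
  rw [phi1Mat]
  have h1 : ∀ k : ℕ, ((Nat.factorial (k+1) : ℂ))⁻¹ • (diagonal v) ^ k
      = diagonal (((Nat.factorial (k+1) : ℂ))⁻¹ • v ^ k) := by
    intro k; rw [diagonal_pow, diagonal_smul]
  simp_rw [h1]
  rw [← Matrix.diagonal_tsum]
  refine congrArg diagonal ?_
  funext i
  have hs : Summable (fun k : ℕ => ((Nat.factorial (k+1) : ℂ))⁻¹ • v ^ k) := by
    rw [Pi.summable]
    intro j
    simpa [smul_eq_mul] using summable_phi1C (v j)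
  rw [tsum_apply hs, phi1C]
  exact tsum_congr fun k => by simp [smul_eq_mul]

lemma hasDerivAt_cexp_real (c : ℂ) (t : ℝ) :
    HasDerivAt (fun s : ℝ => Complex.exp (c * s)) (c * Complex.exp (c * t)) t := by
  have h1 : HasDerivAt (fun s : ℝ => c * (s : ℂ)) c t := by
    simpa using ((hasDerivAt_id (t : ℂ)).const_mul c).comp_ofReal
  simpa [mul_comm, Function.comp_def] using (Complex.hasDerivAt_exp (c * t)).comp t h1

lemma exp_diag_smul {n : ℕ} (d : Fin n → ℂ) (h : ℝ) :
    NormedSpace.exp (h • Matrix.diagonal d)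
      = diagonal (fun j => Complex.exp ((h : ℂ) * d j)) := by
  rw [← diagonal_smul, Matrix.exp_diagonal]
  refine congrArg diagonal ?_
  funext j
  rw [Pi.coe_exp, ← Complex.exp_eq_exp_ℂ, Pi.smul_apply, Complex.real_smul]

lemma phi1Mat_diag_smul {n : ℕ} (d : Fin n → ℂ) (h : ℝ) :
    phi1Mat (h • Matrix.diagonal d)
      = diagonal (fun j => phi1C ((h : ℂ) * d j)) := by
  rw [← diagonal_smul, phi1Mat_diagonal]
  refine congrArg diagonal ?_
  funext j
  rw [Pi.smul_apply, Complex.real_smul]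

/-- One-step error bound for ETD Euler: the local error is O(h²) with a constant depending
only on the Lipschitz constant of N and bounds for ‖N(u(t))‖ and ‖u'(t)‖, provided the
diagonal matrix L has eigenvalues with nonpositive real parts. -/
theorem etd_euler_one_step_error (K M₁ M₂ : ℝ) (hK : 0 ≤ K) (hM₁ : 0 ≤ M₁) (hM₂ : 0 ≤ M₂) :
    ∃ C : ℝ, 0 ≤ C ∧
      ∀ (n : ℕ) (d : Fin n → ℂ), (∀ i, (d i).re ≤ 0) →
        ∀ (N : (Fin n → ℂ) → Fin n → ℂ), LipschitzWith (Real.toNNReal K) N →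
          ∀ (u : ℝ → Fin n → ℂ) (tn h : ℝ), 0 < h →
            (∀ t ∈ Set.Icc tn (tn + h),
              HasDerivAt u ((Matrix.diagonal d).mulVec (u t) + N (u t)) t) →
            (∀ t ∈ Set.Icc tn (tn + h), ‖N (u t)‖ ≤ M₁) →
            (∀ t ∈ Set.Icc tn (tn + h),
              ‖(Matrix.diagonal d).mulVec (u t) + N (u t)‖ ≤ M₂) →
            ‖u (tn + h) -
                ((NormedSpace.exp (h • Matrix.diagonal d)).mulVec (u tn) +
                  h • (phi1Mat (h • Matrix.diagonal d)).mulVec (N (u tn)))‖ ≤ C * h ^ 2 := by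
  refine ⟨K * M₂, mul_nonneg hK hM₂, ?_⟩
  intro n d hd N hN u tn h hh hderiv hN1 hM2b
  have hKc : ((Real.toNNReal K : NNReal) : ℝ) = K := Real.coe_toNNReal K hK
  set T := tn + h with hT
  have htT : tn ≤ T := by simp only [hT]; linarith
  have huIcc : Set.uIcc tn T = Set.Icc tn T := Set.uIcc_of_le htT
  have hu_cont : ContinuousOn u (Set.Icc tn T) := fun t ht =>
    ((hderiv t ht).continuousAt).continuousWithinAt
  have hNu_cont : ContinuousOn (fun t => N (u t)) (Set.Icc tn T) :=
    hN.continuous.comp_continuousOn hu_cont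
  have hstep : ∀ t ∈ Set.Icc tn T, ‖u t - u tn‖ ≤ M₂ * (t - tn) :=
    norm_image_sub_le_of_norm_deriv_le_segment'
      (fun t ht => (hderiv t ht).hasDerivWithinAt)
      (fun t ht => hM2b t (Set.Ico_subset_Icc_self ht))
  have hΔN : ∀ t ∈ Set.Icc tn T, ‖N (u t) - N (u tn)‖ ≤ K * (M₂ * h) := by
    intro t ht
    have h1 : dist (N (u t)) (N (u tn)) ≤ K * dist (u t) (u tn) := by
      have := hN.dist_le_mul (u t) (u tn)
      rwa [hKc] at this
    rw [dist_eq_norm, dist_eq_norm] at h1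
    have h2 : ‖u t - u tn‖ ≤ M₂ * h := by
      refine (hstep t ht).trans ?_
      have ht2 : t - tn ≤ h := by have := ht.2; simp only [hT] at this; linarith
      have ht1 : 0 ≤ t - tn := by linarith [ht.1]
      nlinarith
    calc ‖N (u t) - N (u tn)‖ ≤ K * ‖u t - u tn‖ := h1
      _ ≤ K * (M₂ * h) := by nlinarith [norm_nonneg (u t - u tn)]
  rw [pi_norm_le_iff_of_nonneg (by positivity)]
  intro i
  set lam := d i with hlam_def
  have hui : ∀ t ∈ Set.Icc tn T, HasDerivAt (fun s => u s i) (lam * u t i + N (u t) i) t := by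
    intro t ht
    have h1 := (hasDerivAt_pi.1 (hderiv t ht)) i
    simpa [Matrix.mulVec_diagonal] using h1
  set w : ℝ → ℂ := fun t => Complex.exp (-lam * t) * u t i with hw_def
  have hw : ∀ t ∈ Set.Icc tn T, HasDerivAt w (Complex.exp (-lam * t) * N (u t) i) t := by
    intro t ht
    have he := hasDerivAt_cexp_real (-lam) t
    have h2 := he.mul (hui t ht)
    convert h2 using 1
    · rfl
    · rfl
    ring
  have hint_cont : ContinuousOn (fun t : ℝ => Complex.exp (-lam * t) * N (u t) i)
      (Set.Icc tn T) := by
    apply ContinuousOn.mul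
    · exact (Complex.continuous_exp.comp
        (continuous_const.mul Complex.continuous_ofReal)).continuousOn
    · exact (continuous_apply i).comp_continuousOn hNu_cont
  have hFTC : (∫ t in tn..T, Complex.exp (-lam * t) * N (u t) i) = w T - w tn := by
    apply intervalIntegral.integral_eq_sub_of_hasDerivAt
    · intro t ht
      exact hw t (huIcc ▸ ht)
    · apply ContinuousOn.intervalIntegrable
      rw [huIcc]
      exact hint_cont
  set f : ℝ → ℂ := fun t => Complex.exp (lam * ((T - t : ℝ) : ℂ)) with hf_def
  have hf_cont : Continuous f := by
    apply Complex.continuous_exp.comp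
    exact continuous_const.mul (Complex.continuous_ofReal.comp
      (continuous_const.sub continuous_id))
  have hw_inv : ∀ t : ℝ, Complex.exp (lam * t) * w t = u t i := by
    intro t
    simp only [hw_def]
    rw [← mul_assoc, ← Complex.exp_add]
    have h0 : lam * (t : ℂ) + -lam * (t : ℂ) = 0 := by ring
    rw [h0, Complex.exp_zero, one_mul]
  have hvoc : u T i = Complex.exp ((h : ℂ) * lam) * u tn i
      + ∫ t in tn..T, f t * N (u t) i := by
    have h1 : w T = w tn + ∫ t in tn..T, Complex.exp (-lam * t) * N (u t) i := by
      rw [hFTC]; ring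
    have h2 := hw_inv T
    rw [h1, mul_add] at h2
    rw [← h2]
    congr 1
    · simp only [hw_def]
      rw [← mul_assoc, ← Complex.exp_add]
      congr 2
      rw [hT]
      push_cast
      ring
    · rw [← intervalIntegral.integral_const_mul]
      apply intervalIntegral.integral_congr
      intro t _
      simp only [hf_def]
      rw [← mul_assoc, ← Complex.exp_add]
      congr 2
      push_cast
      ring
  have hphiint : (∫ t in tn..T, f t) = (h : ℂ) * phi1C ((h : ℂ) * lam) := by
    have h1 : f = fun t : ℝ => (fun s : ℝ => Complex.exp (lam * (s : ℂ))) (T - t) := rfl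
    rw [h1, intervalIntegral.integral_comp_sub_left (fun s : ℝ => Complex.exp (lam * (s : ℂ))) T]
    have h2 : T - T = 0 := sub_self T
    have h3 : T - tn = h := by rw [hT]; ring
    rw [h2, h3, integral_exp_phi1C]
  have hI1 : IntervalIntegrable (fun t => f t * N (u t) i) MeasureTheory.volume tn T := by
    apply ContinuousOn.intervalIntegrable
    rw [huIcc]
    exact hf_cont.continuousOn.mul ((continuous_apply i).comp_continuousOn hNu_cont)
  have hI2 : IntervalIntegrable (fun t => f t * N (u tn) i) MeasureTheory.volume tn T :=
    (hf_cont.mul continuous_const).intervalIntegrable tn T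
  have hcomp : (u T -
      ((NormedSpace.exp (h • Matrix.diagonal d)).mulVec (u tn) +
        h • (phi1Mat (h • Matrix.diagonal d)).mulVec (N (u tn)))) i
      = u T i - (Complex.exp ((h : ℂ) * lam) * u tn i
        + (h : ℂ) * (phi1C ((h : ℂ) * lam) * N (u tn) i)) := by
    rw [Pi.sub_apply, Pi.add_apply, Pi.smul_apply, exp_diag_smul, phi1Mat_diag_smul,
      Matrix.mulVec_diagonal, Matrix.mulVec_diagonal, Complex.real_smul]
  have hkey : u T i - (Complex.exp ((h : ℂ) * lam) * u tn i
        + (h : ℂ) * (phi1C ((h : ℂ) * lam) * N (u tn) i))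
      = ∫ t in tn..T, f t * (N (u t) i - N (u tn) i) := by
    have hsub : (∫ t in tn..T, f t * (N (u t) i - N (u tn) i))
        = (∫ t in tn..T, f t * N (u t) i) - ∫ t in tn..T, f t * N (u tn) i := by
      rw [← intervalIntegral.integral_sub hI1 hI2]
      apply intervalIntegral.integral_congr
      intro t _
      ring
    have hconst : (∫ t in tn..T, f t * N (u tn) i)
        = ((h : ℂ) * phi1C ((h : ℂ) * lam)) * N (u tn) i := by
      rw [intervalIntegral.integral_mul_const, hphiint]
    rw [hsub, hconst, hvoc]
    ring
  rw [hcomp, hkey]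
  have hb : ∀ t ∈ Set.uIoc tn T, ‖f t * (N (u t) i - N (u tn) i)‖ ≤ K * (M₂ * h) := by
    intro t ht
    rw [Set.uIoc_of_le htT] at ht
    have htIcc : t ∈ Set.Icc tn T := ⟨le_of_lt ht.1, ht.2⟩
    rw [norm_mul]
    have hf1 : ‖f t‖ ≤ 1 := by
      simp only [hf_def]
      rw [Complex.norm_exp]
      rw [Real.exp_le_one_iff]
      have hre : (lam * ((T - t : ℝ) : ℂ)).re = lam.re * (T - t) := by
        simp [Complex.mul_re]
      rw [hre]
      have h1 : 0 ≤ T - t := by linarith [ht.2]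
      have h2 : lam.re ≤ 0 := hd i
      nlinarith
    have hcompN : ‖N (u t) i - N (u tn) i‖ ≤ K * (M₂ * h) := by
      have h1 := norm_le_pi_norm (N (u t) - N (u tn)) i
      simp only [Pi.sub_apply] at h1
      exact h1.trans (hΔN t htIcc)
    calc ‖f t‖ * ‖N (u t) i - N (u tn) i‖ ≤ 1 * (K * (M₂ * h)) :=
          mul_le_mul hf1 hcompN (norm_nonneg _) zero_le_one
      _ = K * (M₂ * h) := one_mul _
  have hfinal := intervalIntegral.norm_integral_le_of_norm_le_const hb
  have hTd : |T - tn| = h := by rw [hT]; rw [add_sub_cancel_left]; exact abs_of_pos hh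
  rw [hTd] at hfinal
  calc ‖∫ t in tn..T, f t * (N (u t) i - N (u tn) i)‖ ≤ K * (M₂ * h) * h := hfinal
    _ = K * M₂ * h ^ 2 := by ring
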